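/- The canonical homogeneous norm ‖·‖_d is continuous on ℝⁿ and is continuous at the origin; moreover ‖x‖_d = 0 if and only if x = 0, and ‖x‖_d = 1 if and only if ‖x‖ = 1. -/

import Mathlib

open Matrix NormedSpace

noncomputable def dil {n : ℕ} (G : Matrix (Fin n) (Fin n) ℝ) (s : ℝ) :
    Matrix (Fin n) (Fin n) ℝ :=
  NormedSpace.exp (s • G)

noncomputable def wnorm {n : ℕ} (P : Matrix (Fin n) (Fin n) ℝ) (x : Fin n → ℝ) : ℝ :=
  Real.sqrt (x ⬝ᵥ P.mulVec x)

namespace Stmt7Aux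

variable {n : ℕ}

lemma dil_zero (G : Matrix (Fin n) (Fin n) ℝ) : dil G 0 = 1 := by
  simp [dil, NormedSpace.exp_zero]

lemma dil_neg_mul (G : Matrix (Fin n) (Fin n) ℝ) (s : ℝ) :
    dil G (-s) * dil G s = 1 := by
  rw [dil, dil, ← Matrix.exp_add_of_commute]
  · simp [NormedSpace.exp_zero]
  · simp only [neg_smul]
    exact (Commute.refl (s • G)).neg_left

lemma dil_mulVec_ne_zero (G : Matrix (Fin n) (Fin n) ℝ) (s : ℝ) {x : Fin n → ℝ}
    (hx : x ≠ 0) : dil G s *ᵥ x ≠ 0 := by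
  intro h
  apply hx
  have : dil G (-s) *ᵥ (dil G s *ᵥ x) = x := by
    rw [Matrix.mulVec_mulVec, dil_neg_mul, Matrix.one_mulVec]
  rw [h, Matrix.mulVec_zero] at this
  exact this.symm

lemma hasDerivAt_dil_mulVec (G : Matrix (Fin n) (Fin n) ℝ) (x : Fin n → ℝ) (s : ℝ) :
    HasDerivAt (fun t => dil G t *ᵥ x) (G *ᵥ (dil G s *ᵥ x)) s := by
  letI : NormedRing (Matrix (Fin n) (Fin n) ℝ) := Matrix.linftyOpNormedRing
  letI : NormedAlgebra ℝ (Matrix (Fin n) (Fin n) ℝ) := Matrix.linftyOpNormedAlgebra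
  have h : HasDerivAt (fun t : ℝ => exp (t • G)) (G * exp (s • G)) s :=
    hasDerivAt_exp_smul_const' G s
  let L : Matrix (Fin n) (Fin n) ℝ →ₗ[ℝ] (Fin n → ℝ) :=
    { toFun := fun A => A *ᵥ x
      map_add' := fun A B => Matrix.add_mulVec A B x
      map_smul' := fun c A => Matrix.smul_mulVec c A x }
  have hL := (LinearMap.toContinuousLinearMap L).hasFDerivAt (x := exp (s • G))
  have := hL.comp_hasDerivAt s h
  rw [Matrix.mulVec_mulVec]
  exact this

lemma hasDerivAt_qf (P G : Matrix (Fin n) (Fin n) ℝ) (x : Fin n → ℝ) (s : ℝ) :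
    HasDerivAt (fun t => (dil G t *ᵥ x) ⬝ᵥ P *ᵥ (dil G t *ᵥ x))
      ((dil G s *ᵥ x) ⬝ᵥ (P * G + Gᵀ * P) *ᵥ (dil G s *ᵥ x)) s := by
  have hv := hasDerivAt_dil_mulVec G x s
  set vs := dil G s *ᵥ x with hvs
  have hvi : ∀ i, HasDerivAt (fun t => (dil G t *ᵥ x) i) ((G *ᵥ vs) i) s :=
    hasDerivAt_pi.mp hv
  have h1 : ∀ i, HasDerivAt (fun t => (P *ᵥ (dil G t *ᵥ x)) i) ((P *ᵥ (G *ᵥ vs)) i) s := by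
    intro i
    simpa [Matrix.mulVec, dotProduct, Finset.mul_sum] using
      HasDerivAt.fun_sum (fun j (_ : j ∈ Finset.univ) => ((hvi j).const_mul (P i j)))
  have h2 : HasDerivAt (fun t => ∑ i, (dil G t *ᵥ x) i * (P *ᵥ (dil G t *ᵥ x)) i)
      (∑ i, ((G *ᵥ vs) i * (P *ᵥ vs) i + vs i * (P *ᵥ (G *ᵥ vs)) i)) s :=
    HasDerivAt.fun_sum (fun i _ => (hvi i).mul (h1 i))
  have key : (∑ i, ((G *ᵥ vs) i * (P *ᵥ vs) i + vs i * (P *ᵥ (G *ᵥ vs)) i))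
      = vs ⬝ᵥ (P * G + Gᵀ * P) *ᵥ vs := by
    have e1 : (∑ i, (G *ᵥ vs) i * (P *ᵥ vs) i) = (G *ᵥ vs) ⬝ᵥ (P *ᵥ vs) := rfl
    have e2 : (∑ i, vs i * (P *ᵥ (G *ᵥ vs)) i) = vs ⬝ᵥ (P *ᵥ (G *ᵥ vs)) := rfl
    rw [Finset.sum_add_distrib, e1, e2]
    have e3 : (G *ᵥ vs) ⬝ᵥ (P *ᵥ vs) = vs ⬝ᵥ ((Gᵀ * P) *ᵥ vs) := by
      rw [← Matrix.mulVec_mulVec, Matrix.dotProduct_mulVec vs, ← Matrix.mulVec_transpose,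
        Matrix.transpose_transpose, dotProduct_comm]
    rw [e3, Matrix.mulVec_mulVec vs P G, Matrix.add_mulVec, dotProduct_add, add_comm]
  rw [← key]
  exact h2

/-- `W x s = wnorm P (d(s) x)` is strictly increasing in `s`. -/
lemma strictMono_W (P G : Matrix (Fin n) (Fin n) ℝ) (hP : P.PosDef)
    (hmon : (P * G + Gᵀ * P).PosDef) {x : Fin n → ℝ} (hx : x ≠ 0) :
    StrictMono (fun s => wnorm P (dil G s *ᵥ x)) := by
  have hq : StrictMono (fun s => (dil G s *ᵥ x) ⬝ᵥ P *ᵥ (dil G s *ᵥ x)) := by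
    apply strictMono_of_deriv_pos
    intro s
    rw [(hasDerivAt_qf P G x s).deriv]
    have := hmon.dotProduct_mulVec_pos (dil_mulVec_ne_zero G s hx)
    simpa using this
  intro a b hab
  have h0 : (0:ℝ) ≤ (dil G a *ᵥ x) ⬝ᵥ P *ᵥ (dil G a *ᵥ x) := by
    simpa using hP.posSemidef.dotProduct_mulVec_nonneg (dil G a *ᵥ x)
  exact Real.sqrt_lt_sqrt h0 (hq hab)

/-- `S x r = wnorm P (d(-log r) x)`. -/
noncomputable def S (P G : Matrix (Fin n) (Fin n) ℝ) (x : Fin n → ℝ) (r : ℝ) : ℝ :=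
  wnorm P (dil G (-(Real.log r)) *ᵥ x)

lemma S_anti (P G : Matrix (Fin n) (Fin n) ℝ) (hP : P.PosDef)
    (hmon : (P * G + Gᵀ * P).PosDef) {x : Fin n → ℝ} (hx : x ≠ 0)
    {r r' : ℝ} (hr : 0 < r) (h : r < r') : S P G x r' < S P G x r := by
  apply strictMono_W P G hP hmon hx
  exact neg_lt_neg (Real.log_lt_log hr h)

lemma continuous_S (P G : Matrix (Fin n) (Fin n) ℝ) (r : ℝ) :
    Continuous fun x : Fin n → ℝ => S P G x r := by
  unfold S wnorm
  have h1 : Continuous fun x : Fin n → ℝ => dil G (-(Real.log r)) *ᵥ x :=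
    continuous_const.matrix_mulVec continuous_id
  exact Real.continuous_sqrt.comp (h1.dotProduct (continuous_const.matrix_mulVec h1))

lemma S_zero (P G : Matrix (Fin n) (Fin n) ℝ) (r : ℝ) : S P G 0 r = 0 := by
  simp [S, wnorm, Matrix.mulVec_zero]

end Stmt7Aux

open Stmt7Aux in
/-- the canonical homogeneous norm is continuous on `ℝⁿ` (in particular at the
origin); moreover `‖x‖_d = 0 ↔ x = 0` and `‖x‖_d = 1 ↔ ‖x‖ = 1`. -/
theorem stmt7 {n : ℕ} (P G : Matrix (Fin n) (Fin n) ℝ) (hP : P.PosDef)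
    (hmon : (P * G + Gᵀ * P).PosDef)
    (hnd : (Fin n → ℝ) → ℝ) (hnd0 : hnd 0 = 0)
    (hndpos : ∀ x : Fin n → ℝ, x ≠ 0 → 0 < hnd x)
    (hnddef : ∀ x : Fin n → ℝ, x ≠ 0 → wnorm P (dil G (-(Real.log (hnd x))) *ᵥ x) = 1) :
    Continuous hnd ∧ ContinuousAt hnd 0 ∧
    (∀ x : Fin n → ℝ, hnd x = 0 ↔ x = 0) ∧
    (∀ x : Fin n → ℝ, hnd x = 1 ↔ wnorm P x = 1) := by
  -- key order-reflection lemmas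
  have hSdef : ∀ x : Fin n → ℝ, x ≠ 0 → S P G x (hnd x) = 1 := fun x hx => hnddef x hx
  have key_lt : ∀ (x : Fin n → ℝ), x ≠ 0 → ∀ r : ℝ, 0 < r → S P G x r < 1 → hnd x < r := by
    intro x hx r hr h1
    by_contra hc
    push_neg at hc
    rcases eq_or_lt_of_le hc with h | h
    · rw [h, hSdef x hx] at h1; exact lt_irrefl 1 h1
    · have := S_anti P G hP hmon hx hr h
      rw [hSdef x hx] at this
      exact absurd (this.trans h1) (lt_irrefl 1)
  have key_gt : ∀ (x : Fin n → ℝ), x ≠ 0 → ∀ r : ℝ, 0 < r → 1 < S P G x r → r < hnd x := by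
    intro x hx r hr h1
    by_contra hc
    push_neg at hc
    rcases eq_or_lt_of_le hc with h | h
    · rw [← h, hSdef x hx] at h1; exact lt_irrefl 1 h1
    · have := S_anti P G hP hmon hx (hndpos x hx) h
      rw [hSdef x hx] at this
      exact absurd (h1.trans this) (lt_irrefl 1)
  have hcont : ∀ x₀ : Fin n → ℝ, ContinuousAt hnd x₀ := by
    intro x₀
    rw [ContinuousAt, Metric.tendsto_nhds]
    intro ε hε
    by_cases hx₀ : x₀ = 0
    · subst hx₀
      rw [hnd0]
      set r := ε / 2 with hrdef
      have hr : 0 < r := half_pos hε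
      have hopen : IsOpen {x : Fin n → ℝ | S P G x r < 1} :=
        isOpen_lt (continuous_S P G r) continuous_const
      have hmem : (0 : Fin n → ℝ) ∈ {x : Fin n → ℝ | S P G x r < 1} := by
        simp [S_zero]
      filter_upwards [hopen.mem_nhds hmem] with x hx
      rcases eq_or_ne x 0 with rfl | hxne
      · simpa [hnd0] using hε
      · have h1 : hnd x < r := key_lt x hxne r hr hx
        have h2 : 0 < hnd x := hndpos x hxne
        rw [Real.dist_eq, sub_zero, abs_of_pos h2]
        linarith
    · have hpos := hndpos x₀ hx₀
      set δ := min ε (hnd x₀) / 2 with hδdef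
      have hδpos : 0 < δ := by positivity
      have hδε : δ < ε := by
        have : min ε (hnd x₀) ≤ ε := min_le_left _ _
        rw [hδdef]; linarith
      have hδh : δ < hnd x₀ := by
        have : min ε (hnd x₀) ≤ hnd x₀ := min_le_right _ _
        rw [hδdef]; linarith
      have ha : 0 < hnd x₀ - δ := by linarith
      have hSa : 1 < S P G x₀ (hnd x₀ - δ) := by
        have := S_anti P G hP hmon hx₀ ha (by linarith : hnd x₀ - δ < hnd x₀)
        rwa [hSdef x₀ hx₀] at this
      have hSb : S P G x₀ (hnd x₀ + δ) < 1 := by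
        have := S_anti P G hP hmon hx₀ hpos (by linarith : hnd x₀ < hnd x₀ + δ)
        rwa [hSdef x₀ hx₀] at this
      have hopen : IsOpen {x : Fin n → ℝ |
          1 < S P G x (hnd x₀ - δ) ∧ S P G x (hnd x₀ + δ) < 1} :=
        (isOpen_lt continuous_const (continuous_S P G _)).inter
          (isOpen_lt (continuous_S P G _) continuous_const)
      have hmem : x₀ ∈ {x : Fin n → ℝ |
          1 < S P G x (hnd x₀ - δ) ∧ S P G x (hnd x₀ + δ) < 1} := ⟨hSa, hSb⟩
      filter_upwards [hopen.mem_nhds hmem] with x hx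
      have hxne : x ≠ 0 := by
        rintro rfl
        rw [S_zero] at hx
        exact absurd hx.1 (by norm_num)
      have h1 : hnd x₀ - δ < hnd x := key_gt x hxne _ ha hx.1
      have h2 : hnd x < hnd x₀ + δ := key_lt x hxne _ (by linarith) hx.2
      rw [Real.dist_eq, abs_lt]
      constructor <;> linarith
  refine ⟨continuous_iff_continuousAt.mpr hcont, hcont 0, ?_, ?_⟩
  · intro x
    constructor
    · intro h
      by_contra hx
      exact absurd h (ne_of_gt (hndpos x hx))
    · rintro rfl; exact hnd0
  · intro x
    have hS1 : ∀ y : Fin n → ℝ, S P G y 1 = wnorm P y := by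
      intro y
      simp [S, Real.log_one, dil_zero, Matrix.one_mulVec]
    constructor
    · intro h
      have hx : x ≠ 0 := by
        rintro rfl
        rw [hnd0] at h; norm_num at h
      have := hSdef x hx
      rw [h, hS1 x] at this
      · exact this
    · intro h
      have hx : x ≠ 0 := by
        rintro rfl
        rw [wnorm, zero_dotProduct, Real.sqrt_zero] at h
        norm_num at h
      rcases lt_trichotomy (hnd x) 1 with hlt | heq | hgt
      · have := S_anti P G hP hmon hx (hndpos x hx) hlt
        rw [hSdef x hx, hS1 x, h] at this
        norm_num at this
      · exact heq
      · have := S_anti P G hP hmon hx one_pos hgt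
        rw [hSdef x hx, hS1 x, h] at this
        norm_num at this
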